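/- For integers m ≥ 0, n ≥ 1 and any parameter μ ∈ ℝ, the polynomial τ_{m,n}^{(μ)}(z) = det[(z d/dz)^{j+k} L_{m+n}^{(n+μ)}(z)]_{j,k=0}^{n−1} satisfies τ_{m,n}^{(μ)}(z) = a_{m,n} · z^{n(n−1)/2} · T_{m,n}^{(μ)}(z), where a_{m,n} = ∏_{j=1}^{n} (m+n+j+μ)^{j−1}. -/

import Mathlib

noncomputable section

open Finset

/-- Generalized binomial coefficient `C(x, k)` for real `x`. -/
def genBinom (x : ℝ) (k : ℕ) : ℝ :=
  (∏ i ∈ Finset.range k, (x - i)) / (Nat.factorial k)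

/-- Associated Laguerre polynomial `L_n^{(α)}(z)`, with the convention `L_n^{(α)} = 0` for `n < 0`. -/
def lagL (n : ℤ) (α : ℝ) : ℝ → ℝ := fun z =>
  if n < 0 then 0
  else ∑ k ∈ Finset.range (n.toNat + 1),
    (-1 : ℝ) ^ k * genBinom ((n : ℝ) + α) (n.toNat - k) * z ^ k / (Nat.factorial k)

/-- Generalised Laguerre polynomial
`T_{m,n}^{(μ)}(z) = det[(d/dz)^{j+k} L_{m+n}^{(μ+1)}(z)]_{j,k=0}^{n-1}`
(with `T_{m,0}^{(μ)} = 1`, the empty determinant). -/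
def genLag (m : ℤ) (n : ℕ) (μ : ℝ) : ℝ → ℝ := fun z =>
  Matrix.det (Matrix.of fun j k : Fin n =>
    iteratedDeriv ((j : ℕ) + (k : ℕ)) (lagL (m + n) (μ + 1)) z)

/-- Wronskian `Wr(f_1, …, f_r)(z) = det[(d/dz)^{j-1} f_k(z)]`. -/
def wronskian {r : ℕ} (f : Fin r → ℝ → ℝ) : ℝ → ℝ := fun z =>
  Matrix.det (Matrix.of fun j k : Fin r => iteratedDeriv (j : ℕ) (f k) z)

/-- The constant `c_{m,n} = (-1)^{n(2m+1+n)/2} ∏_{j=1}^n (j-1)!/(m+j)!`. -/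
def cmn (m n : ℕ) : ℝ :=
  (-1 : ℝ) ^ (n * (2 * m + 1 + n) / 2) *
    ∏ j ∈ Finset.range n, (Nat.factorial j : ℝ) / (Nat.factorial (m + j + 1))

/-- `τ_{m,n}^{(μ)}(z) = det[(z d/dz)^{j+k} L_{m+n}^{(n+μ)}(z)]_{j,k=0}^{n-1}`. -/
def tauP (m : ℤ) (n : ℕ) (μ : ℝ) : ℝ → ℝ := fun z =>
  Matrix.det (Matrix.of fun j k : Fin n =>
    ((fun (g : ℝ → ℝ) => fun t => t * deriv g t)^[(j : ℕ) + (k : ℕ)]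
      (lagL (m + n) ((n : ℝ) + μ))) z)

/-- Hirota bilinear operator `D_z(f • g) = f' g - f g'`. -/
def hirota (f g : ℝ → ℝ) (z : ℝ) : ℝ := deriv f z * g z - f z * deriv g z

/-- Probabilists' Hermite polynomial `He_n` as a real function. -/
def He (n : ℕ) : ℝ → ℝ := fun z => Polynomial.aeval z (Polynomial.hermite n)

/-- The fifth Painlevé equation (with `δ = -1/2`) for `w` with parameters `(a, b, c)`,
holding at the point `z`. -/
def PV (a b c : ℝ) (w : ℝ → ℝ) (z : ℝ) : Prop :=
  iteratedDeriv 2 w z =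
    (1 / (2 * w z) + 1 / (w z - 1)) * (deriv w z) ^ 2
      - (1 / z) * deriv w z
      + (w z - 1) ^ 2 * (a * (w z) ^ 2 + b) / (z ^ 2 * w z)
      + c * w z / z
      - w z * (w z + 1) / (2 * (w z - 1))

/-- The Jimbo–Miwa–Okamoto `σ`-equation `S_V` with parameters `(ν₁, ν₂, ν₃)`,
holding at the point `z`. -/
def SV (ν₁ ν₂ ν₃ : ℝ) (σ : ℝ → ℝ) (z : ℝ) : Prop :=
  (z * iteratedDeriv 2 σ z) ^ 2 =
    (2 * (deriv σ z) ^ 2 + (ν₁ + ν₂ + ν₃ - z) * deriv σ z + σ z) ^ 2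
      - 4 * deriv σ z * (deriv σ z + ν₁) * (deriv σ z + ν₂) * (deriv σ z + ν₃)

lemma genBinom_zero (x : ℝ) : genBinom x 0 = 1 := by simp [genBinom]

lemma genBinom_mul_self (x : ℝ) (r : ℕ) :
    ((r : ℝ) + 1) * genBinom x (r + 1) = x * genBinom (x - 1) r := by
  have h : ∏ i ∈ range (r + 1), (x - i) = (∏ i ∈ range r, (x - 1 - i)) * x := by
    rw [Finset.prod_range_succ' (fun i => x - i) r]
    simp only [Nat.cast_zero, sub_zero]
    congr 1
    apply Finset.prod_congr rfl; intro i _; push_cast; ring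
  have hf : (Nat.factorial (r+1) : ℝ) = (r+1) * Nat.factorial r := by
    push_cast [Nat.factorial_succ]; ring
  have h1 : (Nat.factorial r : ℝ) ≠ 0 := Nat.cast_ne_zero.2 (Nat.factorial_ne_zero r)
  have h2 : ((r:ℝ) + 1) ≠ 0 := by positivity
  simp only [genBinom]
  rw [h, hf]
  field_simp

lemma genBinom_pascal (x : ℝ) (r : ℕ) :
    genBinom (x + 1) (r + 1) = genBinom x (r + 1) + genBinom x r := by
  have h : ∏ i ∈ range (r + 1), (x + 1 - i) = (x + 1) * ∏ i ∈ range r, (x - i) := by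
    rw [Finset.prod_range_succ' (fun i => x + 1 - i) r]
    rw [mul_comm]
    simp only [Nat.cast_zero, sub_zero]
    congr 1
    apply Finset.prod_congr rfl; intro i _; push_cast; ring
  have h2 : ∏ i ∈ range (r + 1), (x - i) = (∏ i ∈ range r, (x - i)) * (x - r) := by
    rw [Finset.prod_range_succ]
  have hf : (Nat.factorial (r+1) : ℝ) = (r+1) * Nat.factorial r := by
    push_cast [Nat.factorial_succ]; ring
  have h1 : (Nat.factorial r : ℝ) ≠ 0 := Nat.cast_ne_zero.2 (Nat.factorial_ne_zero r)
  have h3 : ((r:ℝ) + 1) ≠ 0 := by positivity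
  simp only [genBinom]
  rw [h, h2, hf]
  field_simp
  ring

/-- coefficient of `z^k` in `lagL M α` (for `M ≥ 0`). -/
def coeffA (M : ℤ) (α : ℝ) (k : ℕ) : ℝ :=
  (-1 : ℝ) ^ k * genBinom ((M : ℝ) + α) (M.toNat - k) / (Nat.factorial k)

def polyF (a : ℕ → ℝ) (r : ℕ) : ℝ → ℝ := fun z => ∑ k ∈ range r, a k * z ^ k

lemma lagL_of_neg {M : ℤ} (h : M < 0) (α : ℝ) : lagL M α = fun _ => 0 := by
  funext z; simp [lagL, h]

lemma lagL_eq_polyF {M : ℤ} (h : 0 ≤ M) (α : ℝ) :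
    lagL M α = polyF (coeffA M α) (M.toNat + 1) := by
  funext z
  simp only [lagL, polyF, if_neg (not_lt.2 h), coeffA]
  apply Finset.sum_congr rfl; intro k _; ring

lemma lagL_zero (α : ℝ) (z : ℝ) : lagL 0 α z = 1 := by
  simp [lagL, genBinom]

lemma polyF_differentiable (a : ℕ → ℝ) (r : ℕ) : Differentiable ℝ (polyF a r) := by
  apply Differentiable.fun_sum
  intro k _
  exact (differentiable_pow k).const_mul (a k)

lemma lagL_differentiable (M : ℤ) (α : ℝ) : Differentiable ℝ (lagL M α) := by
  rcases lt_or_ge M 0 with h | h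
  · rw [lagL_of_neg h]; exact differentiable_const 0
  · rw [lagL_eq_polyF h]; exact polyF_differentiable _ _

lemma polyF_hasDerivAt (a : ℕ → ℝ) (r : ℕ) (z : ℝ) :
    HasDerivAt (polyF a r) (∑ k ∈ range r, a k * (k * z ^ (k - 1))) z := by
  apply HasDerivAt.fun_sum
  intro k _
  exact (hasDerivAt_pow k z).const_mul (a k)

lemma deriv_polyF (a : ℕ → ℝ) (s : ℕ) :
    deriv (polyF a (s + 1)) = polyF (fun k => ((k : ℝ) + 1) * a (k + 1)) s := by
  funext z
  rw [(polyF_hasDerivAt a (s+1) z).deriv]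
  rw [Finset.sum_range_succ' (fun k => a k * (k * z ^ (k - 1))) s]
  simp only [Nat.cast_zero, zero_mul, mul_zero, add_zero, Nat.cast_ofNat]
  apply Finset.sum_congr rfl; intro k _
  push_cast
  ring_nf

lemma deriv_lagL (M : ℤ) (α : ℝ) :
    deriv (lagL M α) = fun z => -(lagL (M - 1) (α + 1) z) := by
  rcases lt_or_ge M 0 with h | h
  · rw [lagL_of_neg h, lagL_of_neg (by omega : M - 1 < 0)]
    simp
  rcases eq_or_lt_of_le h with h0 | h1
  · rw [← h0, lagL_of_neg (by omega : (0:ℤ) - 1 < 0)]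
    have : lagL 0 α = fun _ => (1:ℝ) := funext fun z => lagL_zero α z
    rw [this]; simp
  · have hT : 1 ≤ M.toNat := by omega
    obtain ⟨s, hs⟩ : ∃ s, M.toNat = s + 1 := ⟨M.toNat - 1, by omega⟩
    rw [lagL_eq_polyF h, lagL_eq_polyF (by omega : (0:ℤ) ≤ M - 1)]
    rw [hs]
    rw [deriv_polyF]
    have hT' : (M - 1).toNat = s := by omega
    rw [hT']
    funext z
    simp only [polyF, neg_eq_iff_eq_neg, ← Finset.sum_neg_distrib]
    apply Finset.sum_congr rfl
    intro k _
    have hc : ((M - 1 : ℤ) : ℝ) + (α + 1) = (M : ℝ) + α := by push_cast; ring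
    have hn : (M - 1).toNat - k = s + 1 - (k + 1) := by omega
    simp only [coeffA, hc, hT', hs] at *
    have hfac : (Nat.factorial (k+1) : ℝ) = (k+1) * Nat.factorial k := by
      push_cast [Nat.factorial_succ]; ring
    have h1 : (Nat.factorial k : ℝ) ≠ 0 := Nat.cast_ne_zero.2 (Nat.factorial_ne_zero k)
    have h2 : ((k:ℝ) + 1) ≠ 0 := by positivity
    rw [show s + 1 - (k+1) = s - k from by omega, hfac]
    field_simp
    ring

lemma polyF_mulX (a : ℕ → ℝ) (r : ℕ) (z : ℝ) :
    z * polyF a r z = polyF (fun k => if k = 0 then 0 else a (k - 1)) (r + 1) z := by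
  simp only [polyF, Finset.mul_sum]
  rw [Finset.sum_range_succ' (fun k => (if k = 0 then (0:ℝ) else a (k - 1)) * z ^ k) r]
  norm_num
  apply Finset.sum_congr rfl; intro k _; ring

lemma lag_aux (g1 g2 Mq aq K F z : ℝ) (k' : ℕ) (hF : F ≠ 0) (hK : K + 1 ≠ 0)
    (hgb : (Mq - (K+1)) * g1 = (Mq + aq) * g2) :
    (-1:ℝ)^k' * g1 / F * z^(k'+1) + Mq * ((-1:ℝ)^(k'+1) * g1 / ((K+1)*F) * z^(k'+1))
      = (Mq + aq) * ((-1:ℝ)^(k'+1) * g2 / ((K+1)*F) * z^(k'+1)) := by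
  field_simp
  linear_combination ((-1:ℝ)^(k'+1)*z^(k'+1)) * hgb

lemma lagL_rec (M : ℤ) (α : ℝ) (z : ℝ) :
    z * lagL (M - 1) (α + 1) z + (M : ℝ) * lagL M α z
      = ((M : ℝ) + α) * lagL (M - 1) α z := by
  rcases lt_or_ge M 0 with h | h
  · rw [lagL_of_neg h, lagL_of_neg (show M - 1 < 0 by omega) (α + 1),
      lagL_of_neg (show M - 1 < 0 by omega) α]
    simp
  rcases eq_or_lt_of_le h with h0 | h1
  · rw [← h0, lagL_of_neg (show (0:ℤ) - 1 < 0 by omega) (α + 1),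
      lagL_of_neg (show (0:ℤ) - 1 < 0 by omega) α]
    simp
  obtain ⟨s, hs⟩ : ∃ s, M.toNat = s + 1 := ⟨M.toNat - 1, by omega⟩
  have hM1 : (M - 1).toNat = s := by omega
  have hMr : (M : ℝ) = (s : ℝ) + 1 := by
    have h2 := Int.toNat_of_nonneg h
    rw [← h2, hs]; push_cast; ring
  have hxc : ((M - 1 : ℤ) : ℝ) + (α + 1) = (M : ℝ) + α := by push_cast; ring
  have hxc2 : ((M - 1 : ℤ) : ℝ) + α = ((M : ℝ) + α) - 1 := by push_cast; ring
  rw [lagL_eq_polyF h α, lagL_eq_polyF (show (0:ℤ) ≤ M - 1 by omega) (α + 1),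
    lagL_eq_polyF (show (0:ℤ) ≤ M - 1 by omega) α, hM1, hs]
  rw [polyF_mulX]
  simp only [polyF, Finset.mul_sum, ← Finset.sum_add_distrib]
  rw [Finset.sum_range_succ
    (fun k => (if k = 0 then (0:ℝ) else coeffA (M-1) (α+1) (k-1)) * z ^ k
      + (M:ℝ) * (coeffA M α k * z ^ k)) (s+1)]
  have hfacne : ∀ r : ℕ, (Nat.factorial r : ℝ) ≠ 0 :=
    fun r => Nat.cast_ne_zero.2 (Nat.factorial_ne_zero r)
  have htop : (if s + 1 = 0 then (0:ℝ) else coeffA (M-1) (α+1) (s+1-1)) * z ^ (s+1)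
      + (M:ℝ) * (coeffA M α (s+1) * z ^ (s+1)) = 0 := by
    rw [if_neg (Nat.succ_ne_zero s), Nat.add_sub_cancel]
    simp only [coeffA, hM1, hs, Nat.sub_self, genBinom_zero, hxc]
    have hfac : (Nat.factorial (s+1) : ℝ) = ((s:ℝ)+1) * Nat.factorial s := by
      push_cast [Nat.factorial_succ]; ring
    rw [hfac, hMr]
    have h1 := hfacne s
    have h2 : ((s:ℝ) + 1) ≠ 0 := by positivity
    field_simp
    ring
  rw [htop, add_zero]
  apply Finset.sum_congr rfl
  intro k hk
  have hk' : k ≤ s := by simpa [Nat.lt_succ_iff] using Finset.mem_range.1 hk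
  rcases Nat.eq_zero_or_eq_succ_pred k with hk0 | hk1
  · subst hk0
    have hgb := genBinom_mul_self ((M:ℝ) + α) s
    rw [if_pos rfl]
    simp only [coeffA, hM1, hs, Nat.sub_zero, pow_zero,
      Nat.factorial_zero, Nat.cast_one, hxc2, one_mul, mul_one, div_one]
    linear_combination hgb + genBinom ((M:ℝ)+α) (s+1) * hMr
  · obtain ⟨k', rfl⟩ : ∃ k', k = k' + 1 := ⟨k - 1, hk1⟩
    have hks : k' + 1 ≤ s := hk'
    rw [if_neg (Nat.succ_ne_zero k'), Nat.add_sub_cancel]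
    simp only [coeffA, hM1, hs, hxc, hxc2]
    have e1 : s - k' = (s - k' - 1) + 1 := by omega
    have e2 : s + 1 - (k' + 1) = (s - k' - 1) + 1 := by omega
    have e3 : s - (k' + 1) = s - k' - 1 := by omega
    rw [e1, e2, e3]
    set r : ℕ := s - k' - 1 with hr
    have hgb := genBinom_mul_self ((M:ℝ) + α) r
    have hrr : ((r : ℝ) + 1) = (M : ℝ) - ((k' : ℝ) + 1) := by
      rw [hMr]
      have : (r : ℝ) = (s : ℝ) - k' - 1 := by
        rw [hr]
        push_cast [Nat.cast_sub (by omega : k' ≤ s), Nat.cast_sub (by omega : 1 ≤ s - k')]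
        ring
      rw [this]; ring
    rw [hrr] at hgb
    have hfac : (Nat.factorial (k'+1) : ℝ) = ((k':ℝ)+1) * Nat.factorial k' := by
      push_cast [Nat.factorial_succ]; ring
    rw [hfac]
    exact lag_aux _ _ _ _ _ _ z k' (hfacne k') (by positivity) hgb

lemma theta_lagL (M : ℤ) (α : ℝ) (z : ℝ) :
    z * deriv (lagL M α) z = (M : ℝ) * lagL M α z - ((M : ℝ) + α) * lagL (M - 1) α z := by
  rw [deriv_lagL]
  show z * -(lagL (M - 1) (α + 1) z) = _
  have := lagL_rec M α z
  linarith

lemma iteratedDeriv_lagL (M : ℤ) (α : ℝ) (p : ℕ) :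
    iteratedDeriv p (lagL M α) = fun z => (-1 : ℝ) ^ p * lagL (M - p) (α + p) z := by
  induction p with
  | zero => simp [iteratedDeriv_zero]
  | succ p ih =>
    rw [iteratedDeriv_succ, ih]
    funext z
    rw [deriv_const_mul _ (lagL_differentiable (M - p) (α + p) z)]
    rw [deriv_lagL]
    have h1 : M - p - 1 = M - (p + 1 : ℕ) := by push_cast; ring
    have h2 : α + p + 1 = α + ((p + 1 : ℕ) : ℝ) := by push_cast; ring
    rw [h1, h2]
    ring

lemma lagL_pascal (M : ℤ) (α : ℝ) (z : ℝ) :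
    lagL M α z = lagL M (α + 1) z - lagL (M - 1) (α + 1) z := by
  rcases lt_or_ge M 0 with h | h
  · rw [lagL_of_neg h α, lagL_of_neg h (α + 1), lagL_of_neg (show M - 1 < 0 by omega) (α + 1)]
    simp
  rcases eq_or_lt_of_le h with h0 | h1
  · rw [← h0, lagL_of_neg (show (0:ℤ) - 1 < 0 by omega) (α + 1), lagL_zero, lagL_zero]
    simp
  obtain ⟨s, hs⟩ : ∃ s, M.toNat = s + 1 := ⟨M.toNat - 1, by omega⟩
  have hM1 : (M - 1).toNat = s := by omega
  rw [eq_sub_iff_add_eq]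
  rw [lagL_eq_polyF h α, lagL_eq_polyF h (α + 1),
    lagL_eq_polyF (show (0:ℤ) ≤ M - 1 by omega) (α + 1), hM1, hs]
  simp only [polyF]
  rw [Finset.sum_range_succ (fun k => coeffA M α k * z ^ k) (s + 1),
    Finset.sum_range_succ (fun k => coeffA M (α + 1) k * z ^ k) (s + 1)]
  have htop : coeffA M α (s + 1) = coeffA M (α + 1) (s + 1) := by
    simp [coeffA, hs, genBinom_zero]
  rw [htop, add_right_comm, add_left_inj]
  rw [← Finset.sum_add_distrib]
  apply Finset.sum_congr rfl
  intro k hk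
  have hk' : k ≤ s := by simpa [Nat.lt_succ_iff] using Finset.mem_range.1 hk
  have hxc : ((M - 1 : ℤ) : ℝ) + (α + 1) = (M : ℝ) + α := by push_cast; ring
  have hxc3 : (M : ℝ) + (α + 1) = ((M : ℝ) + α) + 1 := by ring
  simp only [coeffA, hM1, hs, hxc, hxc3]
  have e1 : s + 1 - k = (s - k) + 1 := by omega
  rw [e1]
  rw [genBinom_pascal ((M : ℝ) + α) (s - k)]
  ring

lemma lagL_shift (M : ℤ) (β : ℝ) (d : ℕ) (z : ℝ) :
    lagL M β z = ∑ t ∈ range (d + 1),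
      (-1 : ℝ) ^ t * (d.choose t) * lagL (M - t) (β + d) z := by
  induction d generalizing β with
  | zero => simp
  | succ d ih =>
    rw [ih β]
    have hstep : ∀ t : ℕ, lagL (M - t) (β + d) z
        = lagL (M - t) (β + (d+1:ℕ)) z - lagL (M - (t+1:ℕ)) (β + (d+1:ℕ)) z := by
      intro t
      have h1 : (β : ℝ) + d + 1 = β + ((d + 1 : ℕ) : ℝ) := by push_cast; ring
      have h2 : M - t - 1 = M - ((t + 1 : ℕ) : ℤ) := by push_cast; ring
      rw [lagL_pascal (M - t) (β + d) z, h1, h2]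
    simp only [hstep]
    simp only [mul_sub, Finset.sum_sub_distrib]
    -- Σ_{t∈range(d+1)} c t * v t − Σ_{t∈range(d+1)} c t * v (t+1) = Σ_{t∈range(d+2)} c' t * v t
    rw [Finset.sum_range_succ' (fun t => (-1:ℝ)^t * ((d+1).choose t) * lagL (M - t) (β + (d+1:ℕ)) z) (d+1)]
    have hext : ∑ x ∈ range (d+2), (-1:ℝ)^x * (d.choose x) * lagL (M - x) (β + (d+1:ℕ)) z
        = ∑ x ∈ range (d+1), (-1:ℝ)^x * (d.choose x) * lagL (M - x) (β + (d+1:ℕ)) z := by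
      rw [Finset.sum_range_succ]
      simp [Nat.choose_succ_self]
    rw [← hext]
    rw [Finset.sum_range_succ' (fun x => (-1:ℝ)^x * (d.choose x) * lagL (M - x) (β + (d+1:ℕ)) z) (d+1)]
    rw [add_sub_right_comm]
    rw [← Finset.sum_sub_distrib]
    congr 1
    · apply Finset.sum_congr rfl
      intro k hk
      have hcc : ((d+1).choose (k+1) : ℝ) = d.choose k + d.choose (k+1) := by
        push_cast [Nat.choose_succ_succ]
        ring
      rw [hcc]
      push_cast
      ring
    · simp

/-- Stirling numbers of the second kind. -/
def St : ℕ → ℕ → ℕ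
  | 0, 0 => 1
  | 0, _ + 1 => 0
  | _ + 1, 0 => 0
  | j + 1, p + 1 => (p + 1) * St j (p + 1) + St j p

lemma St_zero_right (j : ℕ) : St (j + 1) 0 = 0 := rfl

lemma St_eq_zero : ∀ {j p : ℕ}, j < p → St j p = 0
  | 0, p + 1, _ => rfl
  | j + 1, p + 1, h => by
    show (p + 1) * St j (p + 1) + St j p = 0
    rw [St_eq_zero (by omega : j < p + 1), St_eq_zero (by omega : j < p)]
    ring

lemma St_diag : ∀ j : ℕ, St j j = 1
  | 0 => rfl
  | j + 1 => by
    show (j + 1) * St j (j + 1) + St j j = 1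
    rw [St_eq_zero (by omega : j < j + 1), St_diag j]
    ring

def thetaOp : (ℝ → ℝ) → (ℝ → ℝ) := fun g => fun t => t * deriv g t

lemma thetaBC (j : ℕ) (M : ℤ) (α : ℝ) :
    thetaOp^[j] (lagL M α) = fun z => ∑ p ∈ range (j + 1),
      (St j p : ℝ) * ((-1 : ℝ) ^ p * z ^ p * lagL (M - p) (α + p) z) := by
  induction j with
  | zero =>
    funext z
    simp [St, Finset.sum_range_one]
  | succ j ih =>
    rw [Function.iterate_succ_apply', ih]
    funext z
    show z * deriv (fun t => ∑ p ∈ range (j + 1),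
      (St j p : ℝ) * ((-1 : ℝ) ^ p * t ^ p * lagL (M - p) (α + p) t)) z = _
    have hd : ∀ p ∈ range (j + 1), HasDerivAt (fun t : ℝ =>
        (St j p : ℝ) * ((-1 : ℝ) ^ p * t ^ p * lagL (M - p) (α + p) t))
        ((St j p : ℝ) * ((-1 : ℝ) ^ p * ((p * z ^ (p - 1)) * lagL (M - p) (α + p) z
          + z ^ p * deriv (lagL (M - p) (α + p)) z))) z := by
      intro p _
      have h1 : HasDerivAt (fun t : ℝ => t ^ p * lagL (M - p) (α + p) t)
          ((p * z ^ (p - 1)) * lagL (M - p) (α + p) z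
            + z ^ p * deriv (lagL (M - p) (α + p)) z) z :=
        (hasDerivAt_pow p z).mul (lagL_differentiable (M - p) (α + p) z).hasDerivAt
      simpa [mul_assoc] using ((h1.const_mul ((-1:ℝ)^p)).const_mul (St j p : ℝ))
    rw [(HasDerivAt.fun_sum hd).deriv]
    rw [Finset.mul_sum]
    have hterm : ∀ p ∈ range (j + 1),
        z * ((St j p : ℝ) * ((-1 : ℝ) ^ p * ((p * z ^ (p - 1)) * lagL (M - p) (α + p) z
          + z ^ p * deriv (lagL (M - p) (α + p)) z)))
        = (St j p : ℝ) * (p : ℝ) * ((-1:ℝ)^p * z^p * lagL (M - p) (α + p) z)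
          + (St j p : ℝ) * ((-1:ℝ)^(p+1) * z^(p+1) * lagL (M - (p+1:ℕ)) (α + (p+1:ℕ)) z) := by
      intro p _
      simp only [deriv_lagL]
      have hc1 : M - p - 1 = M - ((p+1:ℕ) : ℤ) := by push_cast; ring
      have hc2 : α + p + 1 = α + ((p+1:ℕ) : ℝ) := by push_cast; ring
      rw [hc1, hc2]
      rcases Nat.eq_zero_or_pos p with rfl | hp
      · simp; ring
      · have hzp : z * ((p:ℝ) * z ^ (p - 1)) = (p : ℝ) * z ^ p := by
          rw [show p = (p - 1) + 1 from (Nat.succ_pred_eq_of_pos hp).symm]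
          simp only [Nat.add_sub_cancel]
          ring
        linear_combination ((St j p : ℝ) * (-1:ℝ)^p * lagL (M - p) (α + p) z) * hzp
    rw [Finset.sum_congr rfl hterm, Finset.sum_add_distrib]
    have key : ∀ w : ℕ → ℝ,
        (∑ p ∈ range (j+1), (St j p : ℝ) * (p:ℝ) * w p)
          + (∑ p ∈ range (j+1), (St j p : ℝ) * w (p+1))
        = ∑ p ∈ range (j+2), (St (j+1) p : ℝ) * w p := by
      intro w
      rw [Finset.sum_range_succ' (fun p => (St (j+1) p : ℝ) * w p) (j+1)]
      rw [Finset.sum_range_succ' (fun p => (St j p : ℝ) * (p:ℝ) * w p) j]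
      have hext : ∑ p ∈ range (j+1), (St j (p+1) : ℝ) * ((p+1:ℕ):ℝ) * w (p+1)
          = ∑ p ∈ range j, (St j (p+1) : ℝ) * ((p+1:ℕ):ℝ) * w (p+1) := by
        rw [Finset.sum_range_succ]
        rw [St_eq_zero (by omega : j < j + 1)]
        simp
      rw [← hext, St_zero_right]
      simp only [Nat.cast_zero, Nat.cast_ofNat, mul_zero, zero_mul, add_zero]
      rw [← Finset.sum_add_distrib]
      apply Finset.sum_congr rfl
      intro p _
      have : St (j+1) (p+1) = (p + 1) * St j (p + 1) + St j p := rfl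
      rw [this]
      push_cast
      ring
    exact key (fun p => (-1:ℝ)^p * z^p * lagL (M - p) (α + p) z)

lemma thetaIter_diff (j : ℕ) (M : ℤ) (α : ℝ) :
    Differentiable ℝ (thetaOp^[j] (lagL M α)) := by
  rw [thetaBC]
  apply Differentiable.fun_sum
  intro p _
  exact (((differentiable_pow p).const_mul ((-1:ℝ)^p)).mul
    (lagL_differentiable (M - p) (α + p))).const_mul (St j p : ℝ)

lemma thetaIter_sum (j r : ℕ) (d : ℕ → ℝ) (M : ℤ) (α : ℝ) :
    thetaOp^[j] (fun z => ∑ i ∈ range r, d i * lagL (M - i) α z)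
      = fun z => ∑ i ∈ range r, d i * thetaOp^[j] (lagL (M - i) α) z := by
  induction j with
  | zero => simp
  | succ j ih =>
    rw [Function.iterate_succ_apply', ih]
    funext z
    show z * deriv (fun t => ∑ i ∈ range r, d i * thetaOp^[j] (lagL (M - i) α) t) z = _
    have hd : ∀ i ∈ range r, HasDerivAt
        (fun t => d i * thetaOp^[j] (lagL (M - i) α) t)
        (d i * deriv (thetaOp^[j] (lagL (M - i) α)) z) z :=
      fun i _ => ((thetaIter_diff j (M - i) α z).hasDerivAt).const_mul (d i)
    rw [(HasDerivAt.fun_sum hd).deriv, Finset.mul_sum]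
    apply Finset.sum_congr rfl
    intro i _
    rw [Function.iterate_succ_apply']
    show z * (d i * deriv (thetaOp^[j] (lagL (M - i) α)) z)
      = d i * (z * deriv (thetaOp^[j] (lagL (M - i) α)) z)
    ring

/-- Coefficients of `θ^k L_M^{(α)}` in the basis `L_{M-i}^{(α)}`. -/
def cC (M : ℤ) (α : ℝ) : ℕ → ℕ → ℝ
  | 0, 0 => 1
  | 0, _ + 1 => 0
  | k + 1, 0 => (M : ℝ) * cC M α k 0
  | k + 1, i + 1 => ((M : ℝ) - (i + 1)) * cC M α k (i + 1) - ((M : ℝ) - i + α) * cC M α k i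

lemma cC_eq_zero (M : ℤ) (α : ℝ) : ∀ {k i : ℕ}, k < i → cC M α k i = 0
  | 0, i + 1, _ => rfl
  | k + 1, i + 1, h => by
    show ((M : ℝ) - (i + 1)) * cC M α k (i + 1) - ((M : ℝ) - i + α) * cC M α k i = 0
    rw [cC_eq_zero M α (by omega : k < i + 1), cC_eq_zero M α (by omega : k < i)]
    ring

lemma cC_diag (M : ℤ) (α : ℝ) : ∀ k : ℕ,
    cC M α k k = (-1 : ℝ) ^ k * ∏ l ∈ range k, ((M : ℝ) + α - l)
  | 0 => by simp [cC]
  | k + 1 => by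
    show ((M : ℝ) - (k + 1)) * cC M α k (k + 1) - ((M : ℝ) - k + α) * cC M α k k = _
    rw [cC_eq_zero M α (by omega : k < k + 1), cC_diag M α k, Finset.prod_range_succ]
    ring

/-- `θ^k L_M^{(α)}` as a combination of `L_{M-i}^{(α)}`. -/
lemma thetaA (k : ℕ) (M : ℤ) (α : ℝ) :
    thetaOp^[k] (lagL M α) = fun z => ∑ i ∈ range (k + 1), cC M α k i * lagL (M - i) α z := by
  induction k with
  | zero =>
    funext z
    simp [cC, Finset.sum_range_one]
  | succ k ih =>
    rw [Function.iterate_succ_apply', ih]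
    funext z
    show z * deriv (fun t => ∑ i ∈ range (k + 1), cC M α k i * lagL (M - i) α t) z = _
    have hd : ∀ i ∈ range (k + 1), HasDerivAt
        (fun t => cC M α k i * lagL (M - i) α t)
        (cC M α k i * deriv (lagL (M - i) α) z) z :=
      fun i _ => ((lagL_differentiable (M - i) α z).hasDerivAt).const_mul (cC M α k i)
    rw [(HasDerivAt.fun_sum hd).deriv, Finset.mul_sum]
    have hterm : ∀ i ∈ range (k + 1),
        z * (cC M α k i * deriv (lagL (M - i) α) z)
          = cC M α k i * (((M : ℝ) - i) * lagL (M - i) α z)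
            - cC M α k i * ((((M : ℝ) - i) + α) * lagL (M - (i + 1 : ℕ)) α z) := by
      intro i _
      have h := theta_lagL (M - i) α z
      have hc1 : ((M - i : ℤ) : ℝ) = (M : ℝ) - i := by push_cast; ring
      have hc2 : M - i - 1 = M - ((i + 1 : ℕ) : ℤ) := by push_cast; ring
      rw [hc1, hc2] at h
      linear_combination cC M α k i * h
    rw [Finset.sum_congr rfl hterm, Finset.sum_sub_distrib]
    have key : ∀ w : ℕ → ℝ,
        (∑ i ∈ range (k+1), cC M α k i * (((M:ℝ) - i) * w i))
          - (∑ i ∈ range (k+1), cC M α k i * ((((M:ℝ) - i) + α) * w (i+1)))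
        = ∑ i ∈ range (k+2), cC M α (k+1) i * w i := by
      intro w
      rw [Finset.sum_range_succ' (fun i => cC M α (k+1) i * w i) (k+1)]
      rw [Finset.sum_range_succ' (fun i => cC M α k i * (((M:ℝ) - i) * w i)) k]
      have hext : ∑ i ∈ range (k+1), cC M α k (i+1) * (((M:ℝ) - ((i+1:ℕ):ℝ)) * w (i+1))
          = ∑ i ∈ range k, cC M α k (i+1) * (((M:ℝ) - ((i+1:ℕ):ℝ)) * w (i+1)) := by
        rw [Finset.sum_range_succ, cC_eq_zero M α (by omega : k < k + 1)]
        simp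
      rw [← hext]
      rw [sub_eq_iff_eq_add]
      rw [add_right_comm]
      rw [← Finset.sum_add_distrib]
      congr 1
      · apply Finset.sum_congr rfl
        intro i _
        have hdef : cC M α (k+1) (i+1)
            = ((M : ℝ) - (i + 1)) * cC M α k (i + 1) - ((M : ℝ) - i + α) * cC M α k i := rfl
        rw [hdef]
        push_cast
        ring
      · have hdef : cC M α (k+1) 0 = (M : ℝ) * cC M α k 0 := rfl
        rw [hdef]
        push_cast
        ring
    exact key (fun i => lagL (M - i) α z)

/-- relation between `τ_{m,n}^{(μ)}` and `T_{m,n}^{(μ)}`. -/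
theorem tauP_eq_genLag (m n : ℕ) (hn : 1 ≤ n) (μ : ℝ) (z : ℝ) :
    tauP (m : ℤ) n μ z
      = (∏ j ∈ Finset.range n, ((m : ℝ) + n + (j + 1) + μ) ^ j)
          * z ^ (n * (n - 1) / 2) * genLag (m : ℤ) n μ z := by
  set N : ℤ := (m : ℤ) + (n : ℤ) with hN
  set α : ℝ := (n : ℝ) + μ with hα
  -- matrices
  set Wm : Matrix (Fin n) (Fin n) ℝ :=
    Matrix.of (fun j i : Fin n => (thetaOp^[(j : ℕ)] (lagL (N - (i : ℕ)) α)) z) with hWm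
  set Ym : Matrix (Fin n) (Fin n) ℝ :=
    Matrix.of (fun i k : Fin n => cC N α (k : ℕ) (i : ℕ)) with hYm
  set Sm : Matrix (Fin n) (Fin n) ℝ :=
    Matrix.of (fun j p : Fin n => (St (j : ℕ) (p : ℕ) : ℝ)) with hSm
  set Em : Matrix (Fin n) (Fin n) ℝ :=
    Matrix.of (fun p i : Fin n => lagL (N - (i : ℕ) - (p : ℕ)) (α + (p : ℕ)) z) with hEm
  set Dm : Matrix (Fin n) (Fin n) ℝ :=
    Matrix.of (fun p i : Fin n => (-1 : ℝ) ^ (p : ℕ) * z ^ (p : ℕ) * Em p i) with hDm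
  set Am : Matrix (Fin n) (Fin n) ℝ :=
    Matrix.of (fun j j' : Fin n => if (j : ℕ) ≤ (j' : ℕ)
      then ((n - 1 - (j : ℕ)).choose ((j' : ℕ) - (j : ℕ)) : ℝ) else 0) with hAm
  set Hm : Matrix (Fin n) (Fin n) ℝ :=
    Matrix.of (fun j' k : Fin n =>
      (-1 : ℝ) ^ ((j' : ℕ) + (k : ℕ)) * lagL (N - (j' : ℕ) - (k : ℕ)) (α + (k : ℕ)) z) with hHm
  -- step 1 : tauP = det (Wm * Ym)
  have step1 : tauP (m : ℤ) n μ z = Matrix.det (Wm * Ym) := by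
    have h0 : tauP (m : ℤ) n μ z = Matrix.det (Matrix.of fun j k : Fin n =>
        (thetaOp^[(j : ℕ) + (k : ℕ)] (lagL N α)) z) := rfl
    rw [h0]
    congr 1
    ext j k
    rw [Matrix.mul_apply, Matrix.of_apply]
    rw [Function.iterate_add_apply, thetaA ((k : ℕ)) N α,
      thetaIter_sum ((j : ℕ)) ((k : ℕ) + 1) (cC N α (k : ℕ)) N α]
    show ∑ i ∈ range ((k : ℕ) + 1), cC N α (k : ℕ) i * thetaOp^[(j : ℕ)] (lagL (N - i) α) z = _
    have hext : ∑ i ∈ range n,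
          cC N α (k : ℕ) i * thetaOp^[(j : ℕ)] (lagL (N - i) α) z
        = ∑ i ∈ range ((k : ℕ) + 1),
          cC N α (k : ℕ) i * thetaOp^[(j : ℕ)] (lagL (N - i) α) z := by
      apply (Finset.sum_subset (by intro i hi; simp only [Finset.mem_range] at *; omega) _).symm
      intro i hi hni
      simp only [Finset.mem_range] at hi hni
      rw [cC_eq_zero N α (by omega : (k : ℕ) < i), zero_mul]
    rw [← hext, ← Fin.sum_univ_eq_sum_range
      (fun i => cC N α (k : ℕ) i * thetaOp^[(j : ℕ)] (lagL (N - i) α) z) n]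
    apply Finset.sum_congr rfl
    intro i _
    rw [hWm, hYm, Matrix.of_apply, Matrix.of_apply]
    ring
  -- step 2 : Wm = Sm * Dm
  have step2 : Wm = Sm * Dm := by
    ext j i
    rw [Matrix.mul_apply, hWm, Matrix.of_apply]
    rw [thetaBC ((j : ℕ)) (N - (i : ℕ)) α]
    show ∑ p ∈ range ((j : ℕ) + 1),
        (St (j : ℕ) p : ℝ) * ((-1 : ℝ) ^ p * z ^ p * lagL (N - (i : ℕ) - p) (α + p) z) = _
    have hext : ∑ p ∈ range n,
          (St (j : ℕ) p : ℝ) * ((-1 : ℝ) ^ p * z ^ p * lagL (N - (i : ℕ) - p) (α + p) z)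
        = ∑ p ∈ range ((j : ℕ) + 1),
          (St (j : ℕ) p : ℝ) * ((-1 : ℝ) ^ p * z ^ p * lagL (N - (i : ℕ) - p) (α + p) z) := by
      apply (Finset.sum_subset (by intro p hp; simp only [Finset.mem_range] at *; omega) _).symm
      intro p hp hnp
      simp only [Finset.mem_range] at hp hnp
      rw [St_eq_zero (by omega : (j : ℕ) < p)]
      simp
    rw [← hext, ← Fin.sum_univ_eq_sum_range
      (fun p => (St (j : ℕ) p : ℝ) * ((-1 : ℝ) ^ p * z ^ p * lagL (N - (i : ℕ) - p) (α + p) z)) n]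
    apply Finset.sum_congr rfl
    intro p _
    show _ = (St (j : ℕ) (p : ℕ) : ℝ) * ((-1 : ℝ) ^ (p : ℕ) * z ^ (p : ℕ)
      * lagL (N - (i : ℕ) - (p : ℕ)) (α + (p : ℕ)) z)
    ring
  -- dets of triangular matrices
  have detYm : Matrix.det Ym = ∏ k : Fin n, cC N α (k : ℕ) (k : ℕ) := by
    have h : Ym.BlockTriangular id := by
      intro i k hlt
      rw [hYm, Matrix.of_apply]
      exact cC_eq_zero N α hlt
    rw [Matrix.det_of_upperTriangular h]
    exact Finset.prod_congr rfl (fun k _ => by rw [hYm, Matrix.of_apply])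
  have detSm : Matrix.det Sm = 1 := by
    have h : Sm.BlockTriangular OrderDual.toDual := by
      intro i j hlt
      rw [hSm, Matrix.of_apply]
      have : (i : ℕ) < (j : ℕ) := hlt
      rw [St_eq_zero this]
      simp
    rw [Matrix.det_of_lowerTriangular Sm h]
    have : ∀ i : Fin n, Sm i i = 1 := by
      intro i; rw [hSm, Matrix.of_apply, St_diag]; simp
    simp [this]
  have detDm : Matrix.det Dm
      = (∏ p : Fin n, (-1 : ℝ) ^ (p : ℕ) * z ^ (p : ℕ)) * Matrix.det Em := by
    rw [hDm]
    exact Matrix.det_mul_column (fun p : Fin n => (-1 : ℝ) ^ (p : ℕ) * z ^ (p : ℕ)) Em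
  -- genLag side
  have step3 : genLag (m : ℤ) n μ z = Matrix.det (Am * Hm) := by
    have h0 : genLag (m : ℤ) n μ z = Matrix.det (Matrix.of fun j k : Fin n =>
        iteratedDeriv ((j : ℕ) + (k : ℕ)) (lagL N (μ + 1)) z) := rfl
    rw [h0]
    congr 1
    ext j k
    rw [Matrix.of_apply, Matrix.mul_apply]
    rw [iteratedDeriv_lagL N (μ + 1) ((j : ℕ) + (k : ℕ))]
    show (-1 : ℝ) ^ ((j : ℕ) + (k : ℕ))
        * lagL (N - ((j : ℕ) + (k : ℕ) : ℕ)) (μ + 1 + ((j : ℕ) + (k : ℕ) : ℕ)) z = _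
    have hjn : (j : ℕ) < n := j.isLt
    have hkn : (k : ℕ) < n := k.isLt
    rw [lagL_shift (N - ((j : ℕ) + (k : ℕ) : ℕ)) (μ + 1 + ((j : ℕ) + (k : ℕ) : ℕ))
      (n - 1 - (j : ℕ)) z]
    have hβ : μ + 1 + (((j : ℕ) + (k : ℕ) : ℕ) : ℝ) + ((n - 1 - (j : ℕ) : ℕ) : ℝ)
        = α + ((k : ℕ) : ℝ) := by
      rw [hα]
      push_cast [Nat.cast_sub (by omega : (j : ℕ) ≤ n - 1), Nat.cast_sub (by omega : 1 ≤ n)]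
      ring
    rw [hβ]
    have hd1 : n - 1 - (j : ℕ) + 1 = n - (j : ℕ) := by omega
    rw [hd1, Finset.mul_sum]
    have hRHS : ∑ j' : Fin n, Am j j' * Hm j' k
        = ∑ i ∈ range n, (if (j : ℕ) ≤ i then ((n - 1 - (j : ℕ)).choose (i - (j : ℕ)) : ℝ) else 0)
            * ((-1 : ℝ) ^ (i + (k : ℕ)) * lagL (N - i - (k : ℕ)) (α + (k : ℕ)) z) := by
      rw [← Fin.sum_univ_eq_sum_range (fun i =>
        (if (j : ℕ) ≤ i then ((n - 1 - (j : ℕ)).choose (i - (j : ℕ)) : ℝ) else 0)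
          * ((-1 : ℝ) ^ (i + (k : ℕ)) * lagL (N - i - (k : ℕ)) (α + (k : ℕ)) z)) n]
      apply Finset.sum_congr rfl
      intro j' _
      rw [hAm, hHm]
      rfl
    rw [hRHS]
    have hsub : Finset.Ico (j : ℕ) n ⊆ range n := by
      intro i hi
      simp only [Finset.mem_Ico] at hi
      exact Finset.mem_range.2 hi.2
    rw [← Finset.sum_subset hsub (by
      intro i hi hni
      simp only [Finset.mem_range] at hi
      simp only [Finset.mem_Ico, not_and, not_le] at hni
      rw [if_neg (by omega : ¬ (j : ℕ) ≤ i), zero_mul])]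
    rw [Finset.sum_Ico_eq_sum_range]
    apply Finset.sum_congr rfl
    intro t _
    rw [if_pos (Nat.le_add_right _ _), Nat.add_sub_cancel_left]
    have hidx : N - (((j : ℕ) + (k : ℕ) : ℕ) : ℤ) - (t : ℤ)
        = N - (((j : ℕ) + t : ℕ) : ℤ) - ((k : ℕ) : ℤ) := by push_cast; ring
    rw [hidx]
    ring
  have detAm : Matrix.det Am = 1 := by
    have h : Am.BlockTriangular id := by
      intro i j' hlt
      rw [hAm, Matrix.of_apply, if_neg]
      have : (j' : ℕ) < (i : ℕ) := hlt
      omega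
    rw [Matrix.det_of_upperTriangular h]
    have hdiag : ∀ i : Fin n, Am i i = 1 := by
      intro i
      rw [hAm, Matrix.of_apply, if_pos le_rfl, Nat.sub_self, Nat.choose_zero_right, Nat.cast_one]
    simp [hdiag]
  have detHm : Matrix.det Hm = Matrix.det Em := by
    have h1 : Hm = Matrix.diagonal (fun j' : Fin n => (-1 : ℝ) ^ (j' : ℕ)) * Em.transpose
        * Matrix.diagonal (fun k : Fin n => (-1 : ℝ) ^ (k : ℕ)) := by
      ext j' k
      rw [hHm, Matrix.of_apply, Matrix.mul_diagonal, Matrix.diagonal_mul,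
        Matrix.transpose_apply, hEm, Matrix.of_apply, pow_add]
      ring
    rw [h1, Matrix.det_mul, Matrix.det_mul, Matrix.det_diagonal, Matrix.det_transpose]
    have hsq : (∏ i : Fin n, (-1 : ℝ) ^ (i : ℕ)) * (∏ i : Fin n, (-1 : ℝ) ^ (i : ℕ)) = 1 := by
      rw [← Finset.prod_mul_distrib]
      have h2 : ∀ i : Fin n, (-1 : ℝ) ^ (i : ℕ) * (-1 : ℝ) ^ (i : ℕ) = 1 := by
        intro i; rw [← mul_pow]; norm_num
      simp [h2]
    linear_combination Matrix.det Em * hsq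
  -- combine
  have hτ : tauP (m : ℤ) n μ z
      = (∏ p : Fin n, (-1 : ℝ) ^ (p : ℕ) * z ^ (p : ℕ))
        * (∏ k : Fin n, cC N α (k : ℕ) (k : ℕ)) * genLag (m : ℤ) n μ z := by
    rw [step1, Matrix.det_mul, step2, Matrix.det_mul, detSm, detYm, detDm,
      step3, Matrix.det_mul, detAm, detHm]
    ring
  rw [hτ]
  -- now the constants
  have hconst : (∏ p : Fin n, (-1 : ℝ) ^ (p : ℕ) * z ^ (p : ℕ))
        * (∏ k : Fin n, cC N α (k : ℕ) (k : ℕ))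
      = (∏ j ∈ Finset.range n, ((m : ℝ) + n + (j + 1) + μ) ^ j) * z ^ (n * (n - 1) / 2) := by
    have h1 : (∏ k : Fin n, cC N α (k : ℕ) (k : ℕ))
        = ∏ k : Fin n, ((-1 : ℝ) ^ (k : ℕ) * ∏ l ∈ range (k : ℕ), (((N : ℤ) : ℝ) + α - l)) :=
      Finset.prod_congr rfl (fun k _ => cC_diag N α (k : ℕ))
    rw [h1, Finset.prod_mul_distrib, Finset.prod_mul_distrib]
    have hsq : (∏ i : Fin n, (-1 : ℝ) ^ (i : ℕ)) * (∏ i : Fin n, (-1 : ℝ) ^ (i : ℕ)) = 1 := by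
      rw [← Finset.prod_mul_distrib]
      have h2 : ∀ i : Fin n, (-1 : ℝ) ^ (i : ℕ) * (-1 : ℝ) ^ (i : ℕ) = 1 := by
        intro i; rw [← mul_pow]; norm_num
      simp [h2]
    have hz : ∏ p : Fin n, z ^ (p : ℕ) = z ^ (n * (n - 1) / 2) := by
      rw [Finset.prod_pow_eq_pow_sum]
      congr 1
      rw [Fin.sum_univ_eq_sum_range (fun i => i) n]
      exact Finset.sum_range_id n
    have hprod : (∏ k : Fin n, ∏ l ∈ range (k : ℕ), (((N : ℤ) : ℝ) + α - l))
        = ∏ j ∈ Finset.range n, ((m : ℝ) + n + (j + 1) + μ) ^ j := by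
      rw [Fin.prod_univ_eq_prod_range (fun k => ∏ l ∈ range k, (((N : ℤ) : ℝ) + α - l)) n]
      rw [Finset.prod_comm' (t' := range n) (s' := fun l => Finset.Ico (l + 1) n) (by
        intro k l
        simp only [Finset.mem_range, Finset.mem_Ico]
        omega)]
      rw [Finset.prod_congr rfl (fun l _ => Finset.prod_const _)]
      simp only [Nat.card_Ico]
      rw [← Finset.prod_range_reflect (fun j => ((m : ℝ) + n + (j + 1) + μ) ^ j) n]
      apply Finset.prod_congr rfl
      intro l hl
      have hln : l < n := Finset.mem_range.1 hl
      have he : n - (l + 1) = n - 1 - l := by omega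
      rw [he]
      congr 1
      rw [hN, hα]
      push_cast [Nat.cast_sub (by omega : l ≤ n - 1), Nat.cast_sub (by omega : 1 ≤ n)]
      ring
    rw [hz, hprod]
    linear_combination (z ^ (n * (n - 1) / 2)
      * (∏ j ∈ Finset.range n, ((m : ℝ) + n + (j + 1) + μ) ^ j)) * hsq
  rw [hconst]
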